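/- Let S : [0, ∞) → [0, ∞) be nonincreasing and let h : [0, ∞) → [0, ∞) be a nonnegative convex function satisfying ∫₀^∞ h(t) S(t) dt ≤ 1. Then for every x > 0 with ∫₀ˣ S(t) dt > 0 and ∫ₓ^∞ S(t) dt > 0, one has h(x) ≤ (∫₀ˣ S(t) dt)⁻¹ + (∫ₓ^∞ S(t) dt)⁻¹. -/

import Mathlib

open MeasureTheory Set
open scoped ENNReal

noncomputable section

/-- The envelope bound: if `S : [0,∞) → [0,∞)` is nonincreasing, `h` is nonnegative and convex
on `[0,∞)`, and `∫₀^∞ h S ≤ 1`, then for every `x > 0` with `∫₀ˣ S > 0` and `∫ₓ^∞ S > 0`,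
`h(x) ≤ (∫₀ˣ S)⁻¹ + (∫ₓ^∞ S)⁻¹`.  (The integrals are Lebesgue integrals of the nonnegative
integrands, so that no integrability side conditions are needed; `(∞)⁻¹ = 0`.) -/
theorem envelope_bound_for_convex (S h : ℝ → ℝ)
    (hS_nonneg : ∀ t, 0 ≤ t → 0 ≤ S t)
    (hS_anti : AntitoneOn S (Ici 0))
    (hh_conv : ConvexOn ℝ (Ici 0) h)
    (hh_nonneg : ∀ t, 0 ≤ t → 0 ≤ h t)
    (hint : ∫⁻ t in Ioi (0:ℝ), ENNReal.ofReal (h t * S t) ≤ 1) :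
    ∀ x : ℝ, 0 < x →
      0 < ∫⁻ t in Ioo (0:ℝ) x, ENNReal.ofReal (S t) →
      0 < ∫⁻ t in Ioi x, ENNReal.ofReal (S t) →
      ENNReal.ofReal (h x) ≤
        (∫⁻ t in Ioo (0:ℝ) x, ENNReal.ofReal (S t))⁻¹ +
        (∫⁻ t in Ioi x, ENNReal.ofReal (S t))⁻¹ := by
  intro x hx _ _
  have key : ∀ s : Set ℝ, MeasurableSet s → s ⊆ Ioi (0:ℝ) →
      (∀ t ∈ s, h x ≤ h t) →
      ENNReal.ofReal (h x) * (∫⁻ t in s, ENNReal.ofReal (S t)) ≤ 1 := by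
    intro s hs hsub hmono
    calc ENNReal.ofReal (h x) * ∫⁻ t in s, ENNReal.ofReal (S t)
        = ∫⁻ t in s, ENNReal.ofReal (h x) * ENNReal.ofReal (S t) :=
          (lintegral_const_mul' _ _ ENNReal.ofReal_ne_top).symm
      _ ≤ ∫⁻ t in s, ENNReal.ofReal (h t * S t) := by
          refine lintegral_mono_ae ((ae_restrict_iff' hs).2 (ae_of_all _ fun t ht => ?_))
          have ht0 : 0 < t := hsub ht
          rw [← ENNReal.ofReal_mul (hh_nonneg x hx.le)]
          exact ENNReal.ofReal_le_ofReal
            (mul_le_mul_of_nonneg_right (hmono t ht) (hS_nonneg t ht0.le))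
      _ ≤ ∫⁻ t in Ioi 0, ENNReal.ofReal (h t * S t) := lintegral_mono_set hsub
      _ ≤ 1 := hint
  by_cases hcase : ∀ t ∈ Ioo (0:ℝ) x, h x ≤ h t
  · have h1 := key _ measurableSet_Ioo (fun t ht => ht.1) hcase
    exact (ENNReal.le_inv_iff_mul_le.mpr h1).trans le_self_add
  · push_neg at hcase
    obtain ⟨t₀, ht₀, hlt⟩ := hcase
    have hmono : ∀ t ∈ Ioi x, h x ≤ h t := by
      intro t ht
      rw [mem_Ioi] at ht
      by_contra hcon
      push_neg at hcon
      have hd : 0 < t - t₀ := by linarith [ht₀.2]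
      have ha : 0 < (t - x) / (t - t₀) := div_pos (by linarith) hd
      have hb : 0 < (x - t₀) / (t - t₀) := div_pos (by linarith [ht₀.2]) hd
      have hab : (t - x)/(t - t₀) + (x - t₀)/(t - t₀) = 1 := by field_simp; ring
      have hc := hh_conv.2 (mem_Ici.mpr ht₀.1.le)
        (mem_Ici.mpr (by linarith [ht₀.1] : (0:ℝ) ≤ t)) ha.le hb.le hab
      have hx' : ((t - x)/(t - t₀)) • t₀ + ((x - t₀)/(t - t₀)) • t = x := by
        simp only [smul_eq_mul]
        field_simp
        ring
      rw [hx'] at hc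
      simp only [smul_eq_mul] at hc
      have e1 : (t - x)/(t - t₀) * h t₀ < (t - x)/(t - t₀) * h x :=
        mul_lt_mul_of_pos_left hlt ha
      have e2 : (x - t₀)/(t - t₀) * h t < (x - t₀)/(t - t₀) * h x :=
        mul_lt_mul_of_pos_left hcon hb
      have e3 : ((t - x)/(t - t₀) + (x - t₀)/(t - t₀)) * h x = h x := by rw [hab]; ring
      linarith [hc, e1, e2, e3]
    have h1 := key _ measurableSet_Ioi (fun t ht => lt_trans hx (mem_Ioi.mp ht)) hmono
    exact (ENNReal.le_inv_iff_mul_le.mpr h1).trans le_add_self
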